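/- Let (ν̃_n) be a sequence of Radon measures on the Stone space of a Boolean algebra 𝔹, bounded in norm, let (E_n) be pairwise disjoint Borel subsets of St(𝔹), and let P ∈ 𝔹 with E_n ∩ [P] = ∅ for all n. Let c, δ > 0. If |ν̃_n|(E_n) ≥ c for all n, then there exist a subsequence (ν_{n_k}) and pairwise disjoint V_k ∈ 𝔹 with V_k ∩ P = ∅ and |ν_{n_k}|(V_k) ≥ c − δ for all k. -/

import Mathlib

open MeasureTheory Set Filter Topology
open scoped ENNReal

noncomputable section

structure PelState (K : Type) where
  idx : ℕ
  V : Set K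
  G : Set K
  S : Set ℕ
  bud : ℝ≥0∞

def PelGood {K : Type} [TopologicalSpace K] [MeasurableSpace K]
    (μ : ℕ → Measure K) (E : ℕ → Set K) (P : Set K) (Ufil : Ultrafilter ℕ)
    (D : ℝ≥0∞) (s : PelState K) : Prop :=
  IsClopen s.G ∧ s.G ⊆ Pᶜ ∧ s.S ∈ Ufil ∧ s.bud ≠ 0 ∧ s.bud ≤ D ∧
    ∀ m ∈ s.S, μ m (E m ∩ s.Gᶜ) + s.bud ≤ D

def PelRel {K : Type} [TopologicalSpace K] [MeasurableSpace K]
    (μ : ℕ → Measure K) (cδ : ℝ≥0∞) (s t : PelState K) : Prop :=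
  s.idx < t.idx ∧ IsClopen t.V ∧ t.V ⊆ s.G ∧ t.G = s.G \ t.V ∧ t.S ⊆ s.S ∧
    cδ ≤ μ t.idx t.V

lemma exists_clopen_between {K : Type} [TopologicalSpace K] [CompactSpace K] [T2Space K]
    [TotallyDisconnectedSpace K] {C U : Set K} (hC : IsCompact C) (hU : IsOpen U)
    (hCU : C ⊆ U) : ∃ A : Set K, IsClopen A ∧ C ⊆ A ∧ A ⊆ U := by
  have hB : ∀ x : K, x ∈ C → ∃ V : Set K, IsClopen V ∧ x ∈ V ∧ V ⊆ U := fun x hx =>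
    compact_exists_isClopen_in_isOpen hU (hCU hx)
  choose! B hBclopen hBmem hBsub using hB
  obtain ⟨t, ht⟩ := hC.elim_finite_subcover (fun x : C => B x)
    (fun x => (hBclopen x x.2).2) (fun x hx => mem_iUnion.2 ⟨⟨x, hx⟩, hBmem x hx⟩)
  refine ⟨⋃ x ∈ t, B x, ?_, ?_, ?_⟩
  · exact isClopen_biUnion_finset fun x _ => hBclopen x x.2
  · intro y hy
    rcases mem_iUnion₂.1 (ht hy) with ⟨x, hxt, hyx⟩
    exact mem_biUnion hxt hyx
  · exact iUnion₂_subset fun x _ => hBsub x x.2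

theorem pel_aux {K : Type} [TopologicalSpace K] [CompactSpace K] [T2Space K]
    [TotallyDisconnectedSpace K] [MeasurableSpace K] [BorelSpace K]
    (μ : ℕ → Measure K) (hreg : ∀ n, (μ n).Regular) (M : ℝ≥0∞) (hM : M ≠ ⊤)
    (hMb : ∀ n, μ n Set.univ ≤ M)
    (E : ℕ → Set K) (hE : ∀ n, MeasurableSet (E n))
    (hEd : Pairwise (Function.onFun Disjoint E))
    (P : Set K) (hP : IsClopen P) (hEP : ∀ n, Disjoint (E n) P)
    (c δ : ℝ) (hδ : 0 < δ)
    (hEc : ∀ n, ENNReal.ofReal c ≤ μ n (E n)) :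
    ∃ (φ : ℕ → ℕ) (V : ℕ → Set K), StrictMono φ ∧ (∀ k, IsClopen (V k)) ∧
      Pairwise (Function.onFun Disjoint V) ∧ (∀ k, Disjoint (V k) P) ∧
      ∀ k, ENNReal.ofReal (c - δ) ≤ μ (φ k) (V k) := by
  classical
  set D : ℝ≥0∞ := ENNReal.ofReal (δ / 2) with hDdef
  set cδ : ℝ≥0∞ := ENNReal.ofReal (c - δ) with hcδdef
  have hD0 : D ≠ 0 := by
    simp only [hDdef, ne_eq, ENNReal.ofReal_eq_zero, not_le]
    linarith
  have hDtop : D ≠ ⊤ := ENNReal.ofReal_ne_top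
  have hDD : D + D = ENNReal.ofReal δ := by
    rw [hDdef, ← ENNReal.ofReal_add (by linarith) (by linarith)]
    norm_num
  have hfinμ : ∀ n (A : Set K), μ n A ≠ ⊤ := fun n A =>
    ((measure_mono (subset_univ A)).trans_lt ((hMb n).trans_lt hM.lt_top)).ne
  set Ufil : Ultrafilter ℕ := Filter.hyperfilter ℕ with hUdef
  have hUinf : ∀ {T : Set ℕ}, T ∈ Ufil → T.Infinite := by
    intro T hT
    by_contra h
    rw [Set.not_infinite] at h
    exact Set.Finite.notMem_hyperfilter h hT
  have hUmem_cof : ∀ {T : Set ℕ}, Tᶜ.Finite → T ∈ Ufil := fun h =>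
    Filter.mem_hyperfilter_of_finite_compl h
  -- ultralimits
  have hex : ∀ A : Set K, ∃ x : ℝ≥0∞,
      Tendsto (fun m => μ m (E m ∩ A)) (Ufil : Filter ℕ) (𝓝 x) := by
    intro A
    obtain ⟨x, -, hx⟩ := isCompact_univ.ultrafilter_le_nhds
      (Ufil.map fun m => μ m (E m ∩ A)) (by simp [le_principal_iff])
    exact ⟨x, by rwa [Ultrafilter.coe_map] at hx⟩
  choose lim hlim using hex
  have hlimM : ∀ A, lim A ≤ M := fun A =>
    le_of_tendsto (hlim A) (Eventually.of_forall fun m =>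
      (measure_mono (subset_univ _)).trans (hMb m))
  have hsum : ∀ (F : Finset ℕ) (W : ℕ → Set K), (∀ k, MeasurableSet (W k)) →
      (Set.Pairwise ↑F (Function.onFun Disjoint W)) → ∑ k ∈ F, lim (W k) ≤ M := by
    intro F W hWm hWd
    refine le_of_tendsto (tendsto_finset_sum F fun k _ => hlim (W k))
      (Eventually.of_forall fun m => ?_)
    rw [← measure_biUnion_finset
      (hWd.mono' fun i j hij => hij.mono inter_subset_right inter_subset_right)
      (fun k _ => (hE m).inter (hWm k))]
    exact (measure_mono (subset_univ _)).trans (hMb m)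
  -- step lemma
  have hstep : ∀ s : PelState K, PelGood μ E P Ufil D s →
      ∃ t : PelState K, PelGood μ E P Ufil D t ∧ PelRel μ cδ s t := by
    rintro ⟨k0, V0, G, S, bud⟩ ⟨hG, hGP, hS, hbud0, hbudD, hinv⟩
    dsimp only at hG hGP hS hbud0 hbudD hinv ⊢
    set η : ℝ≥0∞ := bud / 2 with hηdef
    have hη0 : η ≠ 0 := by
      simp only [hηdef, ne_eq, ENNReal.div_eq_zero_iff, not_or]
      exact ⟨hbud0, by norm_num⟩
    -- compacts for candidates
    have hcand : ∀ k : ℕ, ∃ C : Set K, IsCompact C ∧ C ⊆ E k ∩ G ∧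
        (k ∈ S → cδ ≤ μ k C) := by
      intro k
      by_cases hk : k ∈ S
      · have h1 : μ k (E k ∩ Gᶜ) ≤ D := le_trans le_self_add (hinv k hk)
        haveI := hreg k
        obtain ⟨C, hCsub, hCc, hlt⟩ := ((hE k).inter hG.isOpen.measurableSet
          |>.exists_isCompact_lt_add (hfinμ k _) hD0)
        refine ⟨C, hCc, hCsub, fun _ => ?_⟩
        rw [hcδdef, ENNReal.ofReal_sub _ hδ.le]
        refine tsub_le_iff_right.mpr ?_
        calc ENNReal.ofReal c ≤ μ k (E k) := hEc k
          _ ≤ μ k (E k ∩ G) + μ k (E k \ G) := measure_le_inter_add_diff _ _ _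
          _ ≤ (μ k C + D) + D := by
              refine add_le_add hlt.le ?_
              rw [diff_eq]
              exact h1
          _ = μ k C + ENNReal.ofReal δ := by rw [add_assoc, hDD]
      · exact ⟨∅, isCompact_empty, empty_subset _, fun h => absurd h hk⟩
    choose C hCcomp hCsub hCμ using hcand
    -- servability
    set Serv : ℕ → Prop := fun k => ∃ A : Set K, IsClopen A ∧ A ⊆ G ∧ lim A < η ∧
      cδ ≤ μ k A with hServdef
    have hbadfin : {k | k ∈ S ∧ ¬ Serv k}.Finite := by
      by_contra hinf
      replace hinf : {k | k ∈ S ∧ ¬ Serv k}.Infinite := hinf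
      have hηtop : η ≠ ⊤ := by
        refine ne_top_of_le_ne_top hDtop ?_
        exact le_trans ENNReal.half_le_self hbudD
      obtain ⟨r, hr⟩ := ENNReal.exists_nat_gt
        ((ENNReal.div_lt_top hM hη0).ne)
      obtain ⟨F, hFsub, hFcard⟩ := hinf.exists_subset_card_eq (r + 1)
      have hFS : ∀ k ∈ F, k ∈ S := fun k hk => (hFsub hk).1
      have hFbad : ∀ k ∈ F, ¬ Serv k := fun k hk => (hFsub hk).2
      -- clopen separation
      have hW : ∀ k : ℕ, ∃ Wk : Set K, IsClopen Wk ∧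
          (k ∈ F → C k ⊆ Wk ∧ Wk ⊆ G ∩ (⋃ j ∈ F.erase k, C j)ᶜ) := by
        intro k
        by_cases hk : k ∈ F
        · have hopen : IsOpen (G ∩ (⋃ j ∈ F.erase k, C j)ᶜ) :=
            hG.isOpen.inter (isOpen_compl_iff.mpr
              (isClosed_biUnion_finset fun j _ => (hCcomp j).isClosed))
          have hsub : C k ⊆ G ∩ (⋃ j ∈ F.erase k, C j)ᶜ := by
            intro x hx
            refine ⟨(hCsub k hx).2, ?_⟩
            simp only [mem_compl_iff, mem_iUnion, not_exists]
            intro j hj hxj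
            have hjk : j ≠ k := Finset.ne_of_mem_erase hj
            exact (hEd hjk).le_bot ⟨(hCsub j hxj).1, (hCsub k hx).1⟩
          obtain ⟨A, hA, hCA, hAsub⟩ := exists_clopen_between (hCcomp k) hopen hsub
          exact ⟨A, hA, fun _ => ⟨hCA, hAsub⟩⟩
        · exact ⟨∅, isClopen_empty, fun h => absurd h hk⟩
      choose W hWclopen hWspec using hW
      set Wh : ℕ → Set K := fun k => W k \ ⋃ j ∈ F.filter (· < k), W j with hWhdef
      have hWhclopen : ∀ k, IsClopen (Wh k) := fun k =>
        (hWclopen k).inter (isClopen_biUnion_finset fun j _ => hWclopen j).compl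
      have hWhsubG : ∀ k ∈ F, Wh k ⊆ G := fun k hk =>
        fun x hx => (((hWspec k hk).2) hx.1).1
      have hCWh : ∀ k ∈ F, C k ⊆ Wh k := by
        intro k hk x hx
        refine ⟨(hWspec k hk).1 hx, ?_⟩
        simp only [mem_iUnion, Finset.mem_filter, not_exists]
        rintro j ⟨hjF, hjk⟩ hxj
        have : x ∈ (⋃ i ∈ F.erase j, C i)ᶜ := ((hWspec j hjF).2 hxj).2
        refine this ?_
        exact mem_biUnion (Finset.mem_erase.2 ⟨(Nat.ne_of_lt hjk).symm, hk⟩) hx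
      have hWhdisj : Set.Pairwise ↑F (Function.onFun Disjoint Wh) := by
        intro i hi j hj hij
        rcases lt_or_gt_of_ne hij with h | h
        · refine Disjoint.mono_left (show Wh i ⊆ W i from diff_subset) ?_
          refine disjoint_left.mpr fun x hxW hxWh => ?_
          exact hxWh.2 (mem_biUnion (Finset.mem_filter.2 ⟨hi, h⟩) hxW)
        · refine Disjoint.mono_right (show Wh j ⊆ W j from diff_subset) ?_
          refine disjoint_left.mpr fun x hxWh hxW => ?_
          exact hxWh.2 (mem_biUnion (Finset.mem_filter.2 ⟨hj, h⟩) hxW)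
      have hηWh : ∀ k ∈ F, η ≤ lim (Wh k) := by
        intro k hk
        by_contra hlt
        push_neg at hlt
        exact hFbad k hk ⟨Wh k, hWhclopen k, hWhsubG k hk, hlt,
          le_trans (hCμ k (hFS k hk)) (measure_mono (hCWh k hk))⟩
      have hsumF : ∑ k ∈ F, lim (Wh k) ≤ M :=
        hsum F Wh (fun k => (hWhclopen k).isOpen.measurableSet) hWhdisj
      have hlow : (F.card : ℝ≥0∞) * η ≤ ∑ k ∈ F, lim (Wh k) := by
        calc (F.card : ℝ≥0∞) * η = F.card • η := by rw [nsmul_eq_mul]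
          _ ≤ ∑ k ∈ F, lim (Wh k) := Finset.card_nsmul_le_sum F _ _ hηWh
      have : M < M := by
        calc M < r * η := by
              rw [← ENNReal.div_lt_iff (Or.inl hη0) (Or.inl hηtop)] at *
              exact lt_of_lt_of_le hr le_rfl
          _ ≤ (F.card : ℝ≥0∞) * η := by
              refine mul_le_mul_left ?_ η
              rw [hFcard]
              exact_mod_cast Nat.le_succ r
          _ ≤ ∑ k ∈ F, lim (Wh k) := hlow
          _ ≤ M := hsumF
      exact absurd this (lt_irrefl M)
    -- pick a servable candidate
    have hSIoi : S ∩ Set.Ioi k0 ∈ Ufil := by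
      refine Filter.inter_mem hS (hUmem_cof ?_)
      simpa using Set.finite_Iic k0
    have : ((S ∩ Set.Ioi k0) \ {k | k ∈ S ∧ ¬ Serv k}).Infinite :=
      (hUinf hSIoi).diff hbadfin
    obtain ⟨k, hkmem⟩ := this.nonempty
    have hkS : k ∈ S := hkmem.1.1
    have hkk0 : k0 < k := hkmem.1.2
    have hkserv : Serv k := by
      by_contra h
      exact hkmem.2 ⟨hkS, h⟩
    obtain ⟨A, hAclopen, hAG, hAlim, hAμ⟩ := hkserv
    -- survivors
    set S' : Set ℕ := S ∩ {m | μ m (E m ∩ A) ≤ η} with hS'def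
    have hS'U : S' ∈ Ufil := by
      refine Filter.inter_mem hS ?_
      have := (hlim A).eventually_le_const hAlim
      exact this
    refine ⟨⟨k, A, G \ A, S', η⟩, ?_, ?_⟩
    · refine ⟨hG.inter hAclopen.compl, fun x hx => hGP hx.1, hS'U, hη0,
        le_trans ENNReal.half_le_self hbudD, ?_⟩
      · intro m hm
        dsimp only
        have hsplit : μ m (E m ∩ (G \ A)ᶜ) ≤ μ m (E m ∩ Gᶜ) + μ m (E m ∩ A) := by
          refine le_trans (measure_mono ?_) (measure_union_le _ _)
          intro x hx
          rcases hx with ⟨hxE, hxc⟩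
          rw [Set.mem_compl_iff, Set.mem_diff, not_and_or, not_not] at hxc
          rcases hxc with h | h
          · exact Or.inl ⟨hxE, h⟩
          · exact Or.inr ⟨hxE, h⟩
        calc μ m (E m ∩ (G \ A)ᶜ) + η ≤ (μ m (E m ∩ Gᶜ) + μ m (E m ∩ A)) + η :=
              add_le_add_left hsplit η
          _ ≤ (μ m (E m ∩ Gᶜ) + η) + η := by
              refine add_le_add_left (add_le_add_right hm.2 _) η
          _ = μ m (E m ∩ Gᶜ) + bud := by
              rw [add_assoc, hηdef, ENNReal.add_halves]
          _ ≤ D := hinv m hm.1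
    · exact ⟨hkk0, hAclopen, hAG, rfl, inter_subset_left, hAμ⟩
  -- initial state
  have hgood0 : PelGood μ E P Ufil D ⟨0, ∅, Pᶜ, Set.univ, D⟩ := by
    refine ⟨hP.compl, subset_rfl, Filter.univ_mem, hD0, le_rfl, ?_⟩
    intro m _
    dsimp only
    rw [compl_compl, (hEP m).inter_eq, measure_empty, zero_add]
  have hstep' : ∀ s : {s : PelState K // PelGood μ E P Ufil D s},
      ∃ t : {s : PelState K // PelGood μ E P Ufil D s}, PelRel μ cδ s.1 t.1 := by
    intro s
    obtain ⟨t, ht, hr⟩ := hstep s.1 s.2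
    exact ⟨⟨t, ht⟩, hr⟩
  choose next hnext using hstep'
  set st : ℕ → {s : PelState K // PelGood μ E P Ufil D s} :=
    fun n => next^[n] ⟨⟨0, ∅, Pᶜ, Set.univ, D⟩, hgood0⟩ with hstdef
  have hst : ∀ n, st (n+1) = next (st n) := fun n => Function.iterate_succ_apply' next n _
  have hrel : ∀ n, PelRel μ cδ (st n).1 (st (n+1)).1 := by
    intro n
    rw [hst n]
    exact hnext (st n)
  have hGsub : ∀ n, (st (n+1)).1.G ⊆ (st n).1.G := by
    intro n
    rw [(hrel n).2.2.2.1]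
    exact diff_subset
  have hGmono : ∀ m n, m ≤ n → (st n).1.G ⊆ (st m).1.G := by
    intro m n h
    induction n, h using Nat.le_induction with
    | base => exact subset_rfl
    | succ n hmn ih => exact (hGsub n).trans ih
  refine ⟨fun k => (st (k+1)).1.idx, fun k => (st (k+1)).1.V, ?_, ?_, ?_, ?_, ?_⟩
  · exact strictMono_nat_of_lt_succ fun k => (hrel (k+1)).1
  · exact fun k => (hrel k).2.1
  · have key : ∀ j k, j < k → Disjoint ((st (j+1)).1.V) ((st (k+1)).1.V) := by
      intro j k hjk
      have h1 : (st (k+1)).1.V ⊆ (st k).1.G := (hrel k).2.2.1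
      have h2 : (st k).1.G ⊆ (st (j+1)).1.G := hGmono (j+1) k hjk
      have h3 : (st (j+1)).1.G = (st j).1.G \ (st (j+1)).1.V := (hrel j).2.2.2.1
      refine disjoint_right.mpr fun x hx => ?_
      have hxG := h2 (h1 hx)
      rw [h3] at hxG
      exact hxG.2
    intro j k hjk
    rcases lt_or_gt_of_ne hjk with h | h
    · exact key j k h
    · exact (key k j h).symm
  · intro k
    have h1 : (st (k+1)).1.V ⊆ (st k).1.G := (hrel k).2.2.1
    have h2 : (st k).1.G ⊆ Pᶜ := (st k).2.2.1
    exact disjoint_left.mpr fun x hx hxP => (h2 (h1 hx)) hxP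
  · exact fun k => (hrel k).2.2.2.2.2


/-- Pełczyński-type lemma on the Stone space `K` of a Boolean algebra `𝔹` (elements
of `𝔹` = clopen subsets of `K`, measures on `𝔹` = Radon signed measures on `K`):
given a norm-bounded sequence of Radon measures `ν_n`, pairwise disjoint Borel sets
`E_n` disjoint from the clopen set `P` with `|ν_n|(E_n) ≥ c`, and `δ > 0`, there
exist a subsequence and pairwise disjoint clopen `V_k`, disjoint from `P`, with
`|ν_{n_k}|(V_k) ≥ c − δ`. -/
theorem stmt16 (K : Type) [TopologicalSpace K] [CompactSpace K] [T2Space K]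
    [TotallyDisconnectedSpace K] [MeasurableSpace K] [BorelSpace K]
    (ν : ℕ → SignedMeasure K)
    (hreg : ∀ n, Measure.Regular ((ν n).totalVariation))
    (hbdd : ∃ M : ℝ≥0∞, M ≠ ⊤ ∧ ∀ n, (ν n).totalVariation Set.univ ≤ M)
    (E : ℕ → Set K) (hE : ∀ n, MeasurableSet (E n))
    (hEd : Pairwise (Function.onFun Disjoint E))
    (P : Set K) (hP : IsClopen P) (hEP : ∀ n, Disjoint (E n) P)
    (c δ : ℝ) (hc : 0 < c) (hδ : 0 < δ)
    (hEc : ∀ n, ENNReal.ofReal c ≤ (ν n).totalVariation (E n)) :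
    ∃ (φ : ℕ → ℕ) (V : ℕ → Set K), StrictMono φ ∧ (∀ k, IsClopen (V k)) ∧
      Pairwise (Function.onFun Disjoint V) ∧ (∀ k, Disjoint (V k) P) ∧
      ∀ k, ENNReal.ofReal (c - δ) ≤ (ν (φ k)).totalVariation (V k) := by
  obtain ⟨M, hM, hMb⟩ := hbdd
  exact pel_aux (fun n => (ν n).totalVariation) hreg M hM hMb E hE hEd P hP hEP c δ hδ hEc
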